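/- arXiv:1107.0177 — 5 statements merged into one kernel-verified Lean document; each statement's English description precedes it below -/
import Mathlib

section
/- Under the hypotheses of the direct sum decomposition, if moreover ‖x₁ + x₂‖ = ‖(‖x₁‖, ‖x₂‖)‖_p for all x₁ ∈ X₁, x₂ ∈ X₂ and some p ∈ [1,∞], then for every ε > 0 the ε-pseudospectrum satisfies spec_ε A = spec_ε A₁ ∪ spec_ε A₂. -/
set_option maxHeartbeats 1000000


open scoped ENNReal

private lemma pn_mono (p : ℝ≥0∞) [Fact (1 ≤ p)] {a b a' b' : ℝ} (ha : 0 ≤ a) (hb : 0 ≤ b)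
    (ha' : a ≤ a') (hb' : b ≤ b') :
    ‖(WithLp.equiv p (ℝ × ℝ)).symm (a, b)‖ ≤ ‖(WithLp.equiv p (ℝ × ℝ)).symm (a', b')‖ := by
  rcases eq_or_ne p ∞ with rfl | hp
  · rw [WithLp.prod_norm_eq_sup, WithLp.prod_norm_eq_sup]
    simp only [WithLp.equiv_symm_apply, WithLp.toLp_fst, WithLp.toLp_snd, Real.norm_eq_abs]
    exact max_le_max (abs_le_abs ha' (by linarith)) (abs_le_abs hb' (by linarith))
  · have hq : 0 < p.toReal :=
      ENNReal.toReal_pos ((lt_of_lt_of_le zero_lt_one (Fact.out : 1 ≤ p)).ne') hp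
    rw [WithLp.prod_norm_eq_add hq, WithLp.prod_norm_eq_add hq]
    simp only [WithLp.equiv_symm_apply, WithLp.toLp_fst, WithLp.toLp_snd, Real.norm_eq_abs,
      abs_of_nonneg ha, abs_of_nonneg hb, abs_of_nonneg (ha.trans ha'),
      abs_of_nonneg (hb.trans hb')]
    have e1 := Real.rpow_le_rpow ha ha' hq.le
    have e2 := Real.rpow_le_rpow hb hb' hq.le
    gcongr <;> assumption

private lemma pn_smul (p : ℝ≥0∞) [Fact (1 ≤ p)] (c a b : ℝ) (hc : 0 ≤ c) :
    ‖(WithLp.equiv p (ℝ × ℝ)).symm (c * a, c * b)‖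
      = c * ‖(WithLp.equiv p (ℝ × ℝ)).symm (a, b)‖ := by
  have h : ((c * a, c * b) : ℝ × ℝ) = c • (a, b) := rfl
  rw [h, WithLp.equiv_symm_apply, WithLp.toLp_smul, norm_smul, Real.norm_eq_abs, abs_of_nonneg hc]

private lemma pn_fst_le (p : ℝ≥0∞) [Fact (1 ≤ p)] {a b : ℝ} (ha : 0 ≤ a) (hb : 0 ≤ b) :
    a ≤ ‖(WithLp.equiv p (ℝ × ℝ)).symm (a, b)‖ := by
  calc a = ‖(WithLp.equiv p (ℝ × ℝ)).symm (a, 0)‖ := by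
        rw [WithLp.equiv_symm_apply, WithLp.norm_toLp_fst, Real.norm_eq_abs, abs_of_nonneg ha]
    _ ≤ _ := pn_mono p ha le_rfl le_rfl hb

private lemma pn_snd_le (p : ℝ≥0∞) [Fact (1 ≤ p)] {a b : ℝ} (ha : 0 ≤ a) (hb : 0 ≤ b) :
    b ≤ ‖(WithLp.equiv p (ℝ × ℝ)).symm (a, b)‖ := by
  calc b = ‖(WithLp.equiv p (ℝ × ℝ)).symm (0, b)‖ := by
        rw [WithLp.equiv_symm_apply, WithLp.norm_toLp_snd, Real.norm_eq_abs, abs_of_nonneg hb]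
    _ ≤ _ := pn_mono p le_rfl hb ha le_rfl

private lemma mem_spectrum_iff' {Y : Type*} [NormedAddCommGroup Y] [NormedSpace ℂ Y]
    (B : Y →L[ℂ] Y) (z : ℂ) :
    z ∈ spectrum ℂ B ↔ ¬ IsUnit (B - algebraMap ℂ (Y →L[ℂ] Y) z) := by
  rw [spectrum.mem_iff, ← neg_sub B (algebraMap ℂ (Y →L[ℂ] Y) z), IsUnit.neg_iff]

/-- The `ε`-pseudospectrum of a bounded operator `B`:
`spec_ε B = spec B ∪ {λ : ‖(B − λI)⁻¹‖ > ε⁻¹}`. -/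
noncomputable def specEps {Y : Type*} [NormedAddCommGroup Y] [NormedSpace ℂ Y]
    (ε : ℝ) (B : Y →L[ℂ] Y) : Set ℂ :=
  spectrum ℂ B ∪ {z : ℂ | ε⁻¹ < ‖Ring.inverse (B - algebraMap ℂ (Y →L[ℂ] Y) z)‖}

/-- Direct sum `X = X₁ ⊕ X₂` of closed subspaces, with the norm on `X` the `p`-norm
of the pair of norms; then `spec_ε A = spec_ε A₁ ∪ spec_ε A₂` for every `ε > 0`. -/
theorem pseudospectrum_direct_sum {X : Type*} [NormedAddCommGroup X] [NormedSpace ℂ X]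
    [CompleteSpace X] (X₁ X₂ : Submodule ℂ X)
    (hX₁ : IsClosed (X₁ : Set X)) (hX₂ : IsClosed (X₂ : Set X))
    (hdecomp : ∀ x : X, ∃! q : X₁ × X₂, x = (q.1 : X) + (q.2 : X))
    (P₁ : X →L[ℂ] X) (hP₁mem : ∀ x : X, P₁ x ∈ X₁) (hP₁proj : ∀ x ∈ X₁, P₁ x = x)
    (A : X →L[ℂ] X) (A₁ : X₁ →L[ℂ] X₁) (A₂ : X₂ →L[ℂ] X₂)
    (hA₁ : ∀ x : X₁, (A₁ x : X) = A (x : X)) (hA₂ : ∀ x : X₂, (A₂ x : X) = A (x : X))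
    (p : ℝ≥0∞) [Fact (1 ≤ p)]
    (hnorm : ∀ (x₁ : X₁) (x₂ : X₂),
      ‖(x₁ : X) + (x₂ : X)‖ = ‖(WithLp.equiv p (ℝ × ℝ)).symm (‖(x₁ : X)‖, ‖(x₂ : X)‖)‖)
    (ε : ℝ) (hε : 0 < ε) :
    specEps ε A = specEps ε A₁ ∪ specEps ε A₂ := by
  classical
  choose q hq hu using hdecomp
  -- uniqueness of the decomposition
  have huniq : ∀ (x₁ y₁ : X₁) (x₂ y₂ : X₂),
      (x₁ : X) + (x₂ : X) = (y₁ : X) + (y₂ : X) → x₁ = y₁ ∧ x₂ = y₂ := by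
    intro x₁ y₁ x₂ y₂ h
    have h1 := hu ((x₁ : X) + (x₂ : X)) (x₁, x₂) rfl
    have h2 := hu ((x₁ : X) + (x₂ : X)) (y₁, y₂) h
    have h3 := h1.trans h2.symm
    exact ⟨congrArg Prod.fst h3, congrArg Prod.snd h3⟩
  -- additivity / homogeneity of q
  have hadd : ∀ x y : X, q (x + y) = q x + q y := by
    intro x y
    refine (hu (x + y) (q x + q y) ?_).symm
    show x + y = (((q x).1 + (q y).1 : X₁) : X) + (((q x).2 + (q y).2 : X₂) : X)
    push_cast
    conv_lhs => rw [hq x, hq y]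
    abel
  have hsmul : ∀ (c : ℂ) (x : X), q (c • x) = c • q x := by
    intro c x
    refine (hu (c • x) (c • q x) ?_).symm
    show c • x = ((c • (q x).1 : X₁) : X) + ((c • (q x).2 : X₂) : X)
    push_cast
    conv_lhs => rw [hq x]
    rw [smul_add]
  -- the bounded projections
  have hbound₁ : ∀ x : X, ‖(q x).1‖ ≤ 1 * ‖x‖ := by
    intro x
    rw [one_mul, Submodule.coe_norm]
    calc ‖((q x).1 : X)‖
        ≤ ‖(WithLp.equiv p (ℝ × ℝ)).symm (‖((q x).1 : X)‖, ‖((q x).2 : X)‖)‖ :=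
          pn_fst_le p (norm_nonneg _) (norm_nonneg _)
      _ = ‖((q x).1 : X) + ((q x).2 : X)‖ := (hnorm _ _).symm
      _ = ‖x‖ := by rw [← hq x]
  have hbound₂ : ∀ x : X, ‖(q x).2‖ ≤ 1 * ‖x‖ := by
    intro x
    rw [one_mul, Submodule.coe_norm]
    calc ‖((q x).2 : X)‖
        ≤ ‖(WithLp.equiv p (ℝ × ℝ)).symm (‖((q x).1 : X)‖, ‖((q x).2 : X)‖)‖ :=
          pn_snd_le p (norm_nonneg _) (norm_nonneg _)
      _ = ‖((q x).1 : X) + ((q x).2 : X)‖ := (hnorm _ _).symm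
      _ = ‖x‖ := by rw [← hq x]
  let π₁ : X →L[ℂ] X₁ := LinearMap.mkContinuous
    { toFun := fun x => (q x).1
      map_add' := fun x y => by show (q (x + y)).1 = (q x).1 + (q y).1; rw [hadd, Prod.fst_add]
      map_smul' := fun c x => by show (q (c • x)).1 = c • (q x).1; rw [hsmul, Prod.smul_fst] } 1 hbound₁
  let π₂ : X →L[ℂ] X₂ := LinearMap.mkContinuous
    { toFun := fun x => (q x).2
      map_add' := fun x y => by show (q (x + y)).2 = (q x).2 + (q y).2; rw [hadd, Prod.snd_add]
      map_smul' := fun c x => by show (q (c • x)).2 = c • (q x).2; rw [hsmul, Prod.smul_snd] } 1 hbound₂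
  have hπ : ∀ x : X, x = (π₁ x : X) + (π₂ x : X) := hq
  have hπ₁ : ∀ (x₁ : X₁) (x₂ : X₂), π₁ ((x₁ : X) + (x₂ : X)) = x₁ := by
    intro x₁ x₂
    exact (huniq _ x₁ _ x₂ (hπ _).symm).1
  have hπ₂ : ∀ (x₁ : X₁) (x₂ : X₂), π₂ ((x₁ : X) + (x₂ : X)) = x₂ := by
    intro x₁ x₂
    exact (huniq _ x₁ _ x₂ (hπ _).symm).2
  have hπ₁' : ∀ x₁ : X₁, π₁ (x₁ : X) = x₁ := fun x₁ => by
    have := hπ₁ x₁ 0; simpa using this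
  have hπ₂' : ∀ x₁ : X₁, π₂ (x₁ : X) = 0 := fun x₁ => by
    have := hπ₂ x₁ 0; simpa using this
  have hπ₁'' : ∀ x₂ : X₂, π₁ (x₂ : X) = 0 := fun x₂ => by
    have := hπ₁ 0 x₂; simpa using this
  have hπ₂'' : ∀ x₂ : X₂, π₂ (x₂ : X) = x₂ := fun x₂ => by
    have := hπ₂ 0 x₂; simpa using this
  -- the key lemma on block-diagonal operators
  have key : ∀ (B : X →L[ℂ] X) (B₁ : X₁ →L[ℂ] X₁) (B₂ : X₂ →L[ℂ] X₂),
      (∀ x : X₁, (B₁ x : X) = B (x : X)) → (∀ x : X₂, (B₂ x : X) = B (x : X)) →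
      ((IsUnit B ↔ IsUnit B₁ ∧ IsUnit B₂) ∧
       (IsUnit B → ‖Ring.inverse B‖ = max ‖Ring.inverse B₁‖ ‖Ring.inverse B₂‖)) := by
    intro B B₁ B₂ hB₁ hB₂
    -- forward direction
    have fwd : IsUnit B → IsUnit B₁ ∧ IsUnit B₂ := by
      intro hU
      set C := Ring.inverse B with hC
      have hBC : ∀ x : X, B (C x) = x := fun x => by
        rw [← ContinuousLinearMap.mul_apply, Ring.mul_inverse_cancel B hU,
          ContinuousLinearMap.one_apply]
      have hCB : ∀ x : X, C (B x) = x := fun x => by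
        rw [← ContinuousLinearMap.mul_apply, Ring.inverse_mul_cancel B hU,
          ContinuousLinearMap.one_apply]
      have hker : ∀ x : X, B x = 0 → x = 0 := fun x h => by
        have := hCB x; rw [h, map_zero] at this; exact this.symm
      -- C preserves X₁
      have hCmem1 : ∀ x₁ : X₁, C (x₁ : X) ∈ X₁ := by
        intro x₁
        have h1 : (x₁ : X) = ((B₁ (π₁ (C (x₁ : X)))) : X) + ((B₂ (π₂ (C (x₁ : X)))) : X) := by
          rw [hB₁, hB₂, ← map_add, ← hπ (C (x₁ : X)), hBC]
        have h2 : B₂ (π₂ (C (x₁ : X))) = 0 := by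
          have := hπ₂ x₁ 0
          rw [Submodule.coe_zero, add_zero] at this
          have h3 := hπ₂ (B₁ (π₁ (C (x₁ : X)))) (B₂ (π₂ (C (x₁ : X))))
          rw [← h1, this] at h3
          exact h3.symm
        have h4 : π₂ (C (x₁ : X)) = 0 := by
          have h5 : B ((π₂ (C (x₁ : X))) : X) = 0 := by
            rw [← hB₂, h2, Submodule.coe_zero]
          have := hker _ h5
          exact Subtype.ext this
        rw [hπ (C (x₁ : X)), h4]
        simp [X₁.add_mem (π₁ (C (x₁ : X))).2 X₁.zero_mem]
      have hCmem2 : ∀ x₂ : X₂, C (x₂ : X) ∈ X₂ := by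
        intro x₂
        have h1 : (x₂ : X) = ((B₁ (π₁ (C (x₂ : X)))) : X) + ((B₂ (π₂ (C (x₂ : X)))) : X) := by
          rw [hB₁, hB₂, ← map_add, ← hπ (C (x₂ : X)), hBC]
        have h2 : B₁ (π₁ (C (x₂ : X))) = 0 := by
          have := hπ₁ 0 x₂
          rw [Submodule.coe_zero, zero_add] at this
          have h3 := hπ₁ (B₁ (π₁ (C (x₂ : X)))) (B₂ (π₂ (C (x₂ : X))))
          rw [← h1, this] at h3
          exact h3.symm
        have h4 : π₁ (C (x₂ : X)) = 0 := by
          have h5 : B ((π₁ (C (x₂ : X))) : X) = 0 := by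
            rw [← hB₁, h2, Submodule.coe_zero]
          exact Subtype.ext (hker _ h5)
        rw [hπ (C (x₂ : X)), h4]
        simp [X₂.add_mem X₂.zero_mem (π₂ (C (x₂ : X))).2]
      let C₁ : X₁ →L[ℂ] X₁ := (C.comp X₁.subtypeL).codRestrict X₁ fun x => hCmem1 x
      let C₂ : X₂ →L[ℂ] X₂ := (C.comp X₂.subtypeL).codRestrict X₂ fun x => hCmem2 x
      have hB₁C₁ : B₁ * C₁ = 1 := by
        ext x
        show ((B₁ (C₁ x)) : X) = (x : X)
        rw [hB₁]
        show B (C (x : X)) = (x : X)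
        exact hBC _
      have hC₁B₁ : C₁ * B₁ = 1 := by
        ext x
        show C ((B₁ x : X)) = (x : X)
        rw [hB₁]
        exact hCB _
      have hB₂C₂ : B₂ * C₂ = 1 := by
        ext x
        show ((B₂ (C₂ x)) : X) = (x : X)
        rw [hB₂]
        exact hBC _
      have hC₂B₂ : C₂ * B₂ = 1 := by
        ext x
        show C ((B₂ x : X)) = (x : X)
        rw [hB₂]
        exact hCB _
      exact ⟨isUnit_iff_exists.mpr ⟨C₁, hB₁C₁, hC₁B₁⟩,
             isUnit_iff_exists.mpr ⟨C₂, hB₂C₂, hC₂B₂⟩⟩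
    -- backward direction, with a formula for the inverse
    have bwd : ∀ (_ : IsUnit B₁) (_ : IsUnit B₂), IsUnit B ∧
        Ring.inverse B = X₁.subtypeL.comp ((Ring.inverse B₁).comp π₁)
          + X₂.subtypeL.comp ((Ring.inverse B₂).comp π₂) := by
      intro hU₁ hU₂
      set C₁ := Ring.inverse B₁ with hC₁
      set C₂ := Ring.inverse B₂ with hC₂
      have hB₁C₁ : ∀ x : X₁, B₁ (C₁ x) = x := fun x => by
        rw [← ContinuousLinearMap.mul_apply, Ring.mul_inverse_cancel B₁ hU₁,
          ContinuousLinearMap.one_apply]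
      have hC₁B₁ : ∀ x : X₁, C₁ (B₁ x) = x := fun x => by
        rw [← ContinuousLinearMap.mul_apply, Ring.inverse_mul_cancel B₁ hU₁,
          ContinuousLinearMap.one_apply]
      have hB₂C₂ : ∀ x : X₂, B₂ (C₂ x) = x := fun x => by
        rw [← ContinuousLinearMap.mul_apply, Ring.mul_inverse_cancel B₂ hU₂,
          ContinuousLinearMap.one_apply]
      have hC₂B₂ : ∀ x : X₂, C₂ (B₂ x) = x := fun x => by
        rw [← ContinuousLinearMap.mul_apply, Ring.inverse_mul_cancel B₂ hU₂,
          ContinuousLinearMap.one_apply]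
      set C : X →L[ℂ] X := X₁.subtypeL.comp (C₁.comp π₁) + X₂.subtypeL.comp (C₂.comp π₂)
        with hCdef
      have hCapp : ∀ x : X, C x = ((C₁ (π₁ x)) : X) + ((C₂ (π₂ x)) : X) := fun x => rfl
      have hBC : B * C = 1 := by
        ext x
        rw [ContinuousLinearMap.mul_apply, ContinuousLinearMap.one_apply, hCapp, map_add,
          ← hB₁, ← hB₂, hB₁C₁, hB₂C₂, ← hπ x]
      have hCB : C * B = 1 := by
        ext x
        have hBx : B x = ((B₁ (π₁ x)) : X) + ((B₂ (π₂ x)) : X) := by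
          rw [hB₁, hB₂, ← map_add, ← hπ x]
        rw [ContinuousLinearMap.mul_apply, ContinuousLinearMap.one_apply, hCapp, hBx,
          hπ₁ (B₁ (π₁ x)) (B₂ (π₂ x)), hπ₂ (B₁ (π₁ x)) (B₂ (π₂ x)), hC₁B₁, hC₂B₂, ← hπ x]
      refine ⟨isUnit_iff_exists.mpr ⟨C, hBC, hCB⟩, ?_⟩
      have : Ring.inverse ((⟨B, C, hBC, hCB⟩ : (X →L[ℂ] X)ˣ) : X →L[ℂ] X)
          = ((⟨B, C, hBC, hCB⟩ : (X →L[ℂ] X)ˣ)⁻¹ : (X →L[ℂ] X)ˣ) :=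
        Ring.inverse_unit _
      exact this
    refine ⟨⟨fwd, fun h => (bwd h.1 h.2).1⟩, ?_⟩
    -- norm equality
    intro hU
    obtain ⟨hU₁, hU₂⟩ := fwd hU
    obtain ⟨-, hCeq⟩ := bwd hU₁ hU₂
    set C₁ := Ring.inverse B₁ with hC₁
    set C₂ := Ring.inverse B₂ with hC₂
    rw [hCeq]
    set C : X →L[ℂ] X := X₁.subtypeL.comp (C₁.comp π₁) + X₂.subtypeL.comp (C₂.comp π₂)
      with hCdef
    have hCapp : ∀ x : X, C x = ((C₁ (π₁ x)) : X) + ((C₂ (π₂ x)) : X) := fun x => rfl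
    have hle : ‖C‖ ≤ max ‖C₁‖ ‖C₂‖ := by
      refine ContinuousLinearMap.opNorm_le_bound _
        (le_max_of_le_left (norm_nonneg C₁)) fun x => ?_
      set M := max ‖C₁‖ ‖C₂‖ with hM
      calc ‖C x‖ = ‖((C₁ (π₁ x)) : X) + ((C₂ (π₂ x)) : X)‖ := by rw [hCapp]
        _ = ‖(WithLp.equiv p (ℝ × ℝ)).symm (‖((C₁ (π₁ x)) : X)‖, ‖((C₂ (π₂ x)) : X)‖)‖ :=
            hnorm _ _
        _ ≤ ‖(WithLp.equiv p (ℝ × ℝ)).symm (M * ‖((π₁ x) : X)‖, M * ‖((π₂ x) : X)‖)‖ := by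
            refine pn_mono p (norm_nonneg _) (norm_nonneg _) ?_ ?_
            · rw [← Submodule.coe_norm, ← Submodule.coe_norm]
              exact (C₁.le_opNorm _).trans
                (mul_le_mul_of_nonneg_right (le_max_left _ _) (norm_nonneg _))
            · rw [← Submodule.coe_norm, ← Submodule.coe_norm]
              exact (C₂.le_opNorm _).trans
                (mul_le_mul_of_nonneg_right (le_max_right _ _) (norm_nonneg _))
        _ = M * ‖(WithLp.equiv p (ℝ × ℝ)).symm (‖((π₁ x) : X)‖, ‖((π₂ x) : X)‖)‖ :=
            pn_smul p M _ _ (le_max_of_le_left (norm_nonneg C₁))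
        _ = M * ‖((π₁ x) : X) + ((π₂ x) : X)‖ := by rw [hnorm]
        _ = M * ‖x‖ := by rw [← hπ x]
    have hge₁ : ‖C₁‖ ≤ ‖C‖ := by
      refine ContinuousLinearMap.opNorm_le_bound _ (norm_nonneg _) fun x => ?_
      have h1 : C (x : X) = ((C₁ x) : X) := by
        rw [hCapp, hπ₁' x, hπ₂' x, map_zero, Submodule.coe_zero, add_zero]
      calc ‖C₁ x‖ = ‖C (x : X)‖ := by rw [h1, Submodule.coe_norm]
        _ ≤ ‖C‖ * ‖(x : X)‖ := C.le_opNorm _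
        _ = ‖C‖ * ‖x‖ := by rw [← Submodule.coe_norm]
    have hge₂ : ‖C₂‖ ≤ ‖C‖ := by
      refine ContinuousLinearMap.opNorm_le_bound _ (norm_nonneg _) fun x => ?_
      have h1 : C (x : X) = ((C₂ x) : X) := by
        rw [hCapp, hπ₁'' x, hπ₂'' x, map_zero, Submodule.coe_zero, zero_add]
      calc ‖C₂ x‖ = ‖C (x : X)‖ := by rw [h1, Submodule.coe_norm]
        _ ≤ ‖C‖ * ‖(x : X)‖ := C.le_opNorm _
        _ = ‖C‖ * ‖x‖ := by rw [← Submodule.coe_norm]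
    exact le_antisymm hle (max_le hge₁ hge₂)
  -- now assemble
  ext z
  set Bz := A - algebraMap ℂ (X →L[ℂ] X) z with hBz
  set B₁z := A₁ - algebraMap ℂ (X₁ →L[ℂ] X₁) z with hB₁z
  set B₂z := A₂ - algebraMap ℂ (X₂ →L[ℂ] X₂) z with hB₂z
  have hcomp₁ : ∀ x : X₁, (B₁z x : X) = Bz (x : X) := by
    intro x
    rw [hB₁z, hBz]
    simp only [ContinuousLinearMap.sub_apply, Algebra.algebraMap_eq_smul_one,
      ContinuousLinearMap.smul_apply, ContinuousLinearMap.one_apply]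
    push_cast
    rw [hA₁]
  have hcomp₂ : ∀ x : X₂, (B₂z x : X) = Bz (x : X) := by
    intro x
    rw [hB₂z, hBz]
    simp only [ContinuousLinearMap.sub_apply, Algebra.algebraMap_eq_smul_one,
      ContinuousLinearMap.smul_apply, ContinuousLinearMap.one_apply]
    push_cast
    rw [hA₂]
  obtain ⟨hiff, hninv⟩ := key Bz B₁z B₂z hcomp₁ hcomp₂
  by_cases hz : IsUnit Bz
  · obtain ⟨hz₁, hz₂⟩ := hiff.mp hz
    have hsA : z ∉ spectrum ℂ A := fun h => ((mem_spectrum_iff' A z).mp h) hz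
    have hsA₁ : z ∉ spectrum ℂ A₁ := fun h => ((mem_spectrum_iff' A₁ z).mp h) hz₁
    have hsA₂ : z ∉ spectrum ℂ A₂ := fun h => ((mem_spectrum_iff' A₂ z).mp h) hz₂
    have he := hninv hz
    simp only [specEps, Set.mem_union, Set.mem_setOf_eq]
    rw [← hBz, ← hB₁z, ← hB₂z, he, lt_max_iff]
    tauto
  · have h2 := hiff.not.mp hz
    have hsA : z ∈ spectrum ℂ A := (mem_spectrum_iff' A z).mpr hz
    rcases not_and_or.mp (fun h => hz (hiff.mpr h)) with h | h
    · have hsA₁ : z ∈ spectrum ℂ A₁ := (mem_spectrum_iff' A₁ z).mpr h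
      simp [specEps, hsA, hsA₁]
    · have hsA₂ : z ∈ spectrum ℂ A₂ := (mem_spectrum_iff' A₂ z).mpr h
      simp [specEps, hsA, hsA₂]
end

section
/- If b ∈ {±1}^ℤ is 2-periodic but not constant, then the spectrum of A^b on ℓ²(ℤ) equals τ₂ := {x ± ix : −1 ≤ x ≤ 1}, i.e. the set of λ ∈ ℂ with λ² = 2i sin θ for some θ ∈ ℝ. -/
open Complex
open scoped ENNReal

noncomputable section
namespace SpecTwoPer

local notation "H" => lp (fun _ : ℤ => ℂ) 2

lemma two_pos : 0 < (2 : ℝ≥0∞).toReal := by norm_num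

lemma memℓp_mulShift (m : ℤ → ℂ) (hm : ∀ i, ‖m i‖ = 1) (σ : ℤ ≃ ℤ) (f : H) :
    Memℓp (fun i => m i * (f : ∀ _ : ℤ, ℂ) (σ i)) 2 := by
  apply memℓp_gen
  have h1 : Summable (fun i : ℤ => ‖(f : ∀ _ : ℤ, ℂ) i‖ ^ (2 : ℝ≥0∞).toReal) :=
    (lp.memℓp f).summable two_pos
  have h2 := (σ.summable_iff
    (f := fun i : ℤ => ‖(f : ∀ _ : ℤ, ℂ) i‖ ^ (2 : ℝ≥0∞).toReal)).2 h1
  refine h2.congr fun i => ?_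
  simp [Function.comp, norm_mul, hm i]

lemma norm_mulShift (m : ℤ → ℂ) (hm : ∀ i, ‖m i‖ = 1) (σ : ℤ ≃ ℤ) (f : H) :
    ‖(⟨fun i => m i * (f : ∀ _ : ℤ, ℂ) (σ i), memℓp_mulShift m hm σ f⟩ : H)‖ = ‖f‖ := by
  rw [lp.norm_eq_tsum_rpow two_pos, lp.norm_eq_tsum_rpow two_pos]
  congr 1
  rw [← σ.tsum_eq (f := fun i : ℤ => ‖(f : ∀ _ : ℤ, ℂ) i‖ ^ (2 : ℝ≥0∞).toReal)]
  refine tsum_congr fun i => ?_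
  simp [norm_mul, hm i]

/-- The operator `x ↦ (i ↦ m i * x (σ i))`. -/
def mulShift (m : ℤ → ℂ) (hm : ∀ i, ‖m i‖ = 1) (σ : ℤ ≃ ℤ) : H →L[ℂ] H :=
  LinearMap.mkContinuous
    { toFun := fun f => (⟨fun i => m i * (f : ∀ _ : ℤ, ℂ) (σ i), memℓp_mulShift m hm σ f⟩ : H)
      map_add' := by
        intro f g; apply lp.ext; funext i
        simp [lp.coeFn_add, mul_add]; rfl
      map_smul' := by
        intro c f; apply lp.ext; funext i
        simp [lp.coeFn_smul, Pi.smul_apply, smul_eq_mul]; ring }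
    1 (fun f => by rw [one_mul]; exact le_of_eq (norm_mulShift m hm σ f))

@[simp] lemma mulShift_apply (m : ℤ → ℂ) (hm : ∀ i, ‖m i‖ = 1) (σ : ℤ ≃ ℤ) (f : H) (i : ℤ) :
    (mulShift m hm σ f : ∀ _ : ℤ, ℂ) i = m i * (f : ∀ _ : ℤ, ℂ) (σ i) := rfl

lemma norm_mulShift_le (m : ℤ → ℂ) (hm : ∀ i, ‖m i‖ = 1) (σ : ℤ ≃ ℤ) :
    ‖mulShift m hm σ‖ ≤ 1 :=
  LinearMap.mkContinuous_norm_le _ zero_le_one _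

/-- Right translate: `(R x) i = x (i + 2)`. -/
def R : H →L[ℂ] H := mulShift 1 (fun _ => norm_one) (Equiv.addRight 2)

/-- Left translate: `(L x) i = x (i - 2)`. -/
def L : H →L[ℂ] H := mulShift 1 (fun _ => norm_one) (Equiv.subRight 2)

@[simp] lemma R_apply (f : H) (i : ℤ) : (R f : ∀ _ : ℤ, ℂ) i = (f : ∀ _ : ℤ, ℂ) (i + 2) := by
  simp [R]

@[simp] lemma L_apply (f : H) (i : ℤ) : (L f : ∀ _ : ℤ, ℂ) i = (f : ∀ _ : ℤ, ℂ) (i - 2) := by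
  simp [L]

end SpecTwoPer

namespace SpecTwoPer

local notation "H" => lp (fun _ : ℤ => ℂ) 2

open scoped InnerProductSpace in
lemma R_eq_adjoint_L : R = ContinuousLinearMap.adjoint L := by
  rw [ContinuousLinearMap.eq_adjoint_iff]
  intro x y
  rw [lp.inner_eq_tsum, lp.inner_eq_tsum]
  calc ∑' i : ℤ, ⟪(R x : ∀ _ : ℤ, ℂ) i, (y : ∀ _ : ℤ, ℂ) i⟫_ℂ
      = ∑' i : ℤ, (fun j : ℤ => (starRingEnd ℂ) ((x : ∀ _ : ℤ, ℂ) j) * (y : ∀ _ : ℤ, ℂ) (j - 2))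
          ((Equiv.addRight (2 : ℤ)) i) := by
        refine tsum_congr fun i => ?_
        simp [RCLike.inner_apply, add_sub_cancel_right]; ring
    _ = ∑' j : ℤ, (starRingEnd ℂ) ((x : ∀ _ : ℤ, ℂ) j) * (y : ∀ _ : ℤ, ℂ) (j - 2) :=
        (Equiv.addRight (2 : ℤ)).tsum_eq
          (fun j : ℤ => (starRingEnd ℂ) ((x : ∀ _ : ℤ, ℂ) j) * (y : ∀ _ : ℤ, ℂ) (j - 2))
    _ = ∑' i : ℤ, ⟪(x : ∀ _ : ℤ, ℂ) i, (L y : ∀ _ : ℤ, ℂ) i⟫_ℂ := by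
        refine tsum_congr fun i => ?_
        simp [RCLike.inner_apply]; ring

lemma adjoint_R : ContinuousLinearMap.adjoint R = L := by
  rw [R_eq_adjoint_L, ContinuousLinearMap.adjoint_adjoint]

lemma adjoint_L : ContinuousLinearMap.adjoint L = R := R_eq_adjoint_L.symm

lemma isSelfAdjoint_smul_I (T : H →L[ℂ] H)
    (hT : ∀ (x : H) (i : ℤ), (T x : ∀ _ : ℤ, ℂ) i
      = (x : ∀ _ : ℤ, ℂ) (i + 2) - (x : ∀ _ : ℤ, ℂ) (i - 2)) :
    T = R - L ∧ IsSelfAdjoint (Complex.I • T) := by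
  have hTRL : T = R - L := by
    ext x i
    simp [hT, ContinuousLinearMap.sub_apply, lp.coeFn_sub]
  refine ⟨hTRL, ?_⟩
  rw [IsSelfAdjoint, star_smul, ContinuousLinearMap.star_eq_adjoint, hTRL, map_sub,
    adjoint_R, adjoint_L, Complex.star_def, Complex.conj_I]
  module

end SpecTwoPer

namespace SpecTwoPer

local notation "H" => lp (fun _ : ℤ => ℂ) 2

instance : Nontrivial H := by
  refine ⟨lp.single 2 (0 : ℤ) (1 : ℂ), 0, fun h => ?_⟩
  have := congrArg (fun f : H => (f : ∀ _ : ℤ, ℂ) 0) h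
  simp [lp.single_apply_self] at this

lemma upper_bound (T : H →L[ℂ] H)
    (hT : ∀ (x : H) (i : ℤ), (T x : ∀ _ : ℤ, ℂ) i
      = (x : ∀ _ : ℤ, ℂ) (i + 2) - (x : ∀ _ : ℤ, ℂ) (i - 2))
    {ν : ℂ} (hν : ν ∈ spectrum ℂ T) :
    ∃ θ : ℝ, ν = 2 * Complex.I * (Real.sin θ : ℂ) := by
  obtain ⟨hTRL, hsa⟩ := isSelfAdjoint_smul_I T hT
  -- `I • ν` lies in the spectrum of the selfadjoint `I • T`
  have hmem : Complex.I * ν ∈ spectrum ℂ (Complex.I • T) := by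
    rw [spectrum.mem_iff] at hν ⊢
    intro hcon
    apply hν
    have hkey : algebraMap ℂ (H →L[ℂ] H) (Complex.I * ν) - Complex.I • T
        = (Units.mk0 Complex.I Complex.I_ne_zero) • (algebraMap ℂ (H →L[ℂ] H) ν - T) := by
      rw [Units.smul_def, Units.val_mk0, smul_sub, Algebra.algebraMap_eq_smul_one,
        Algebra.algebraMap_eq_smul_one, smul_smul]
    rw [hkey, isUnit_smul_iff] at hcon
    exact hcon
  -- hence it is real
  have hre : Complex.I * ν = ((Complex.I * ν).re : ℂ) := hsa.mem_spectrum_eq_re hmem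
  set t : ℝ := (Complex.I * ν).re with ht
  -- and bounded by `‖I • T‖ ≤ 2`
  have hnorm : ‖Complex.I * ν‖ ≤ 2 := by
    have h1 : ‖Complex.I * ν‖ ≤ ‖Complex.I • T‖ := spectrum.norm_le_norm_of_mem hmem
    have h2 : ‖Complex.I • T‖ ≤ 2 := by
      calc ‖Complex.I • T‖ ≤ ‖Complex.I‖ * ‖T‖ := ContinuousLinearMap.opNorm_smul_le _ _
        _ = ‖R - L‖ := by rw [Complex.norm_I, one_mul, hTRL]
        _ ≤ ‖R‖ + ‖L‖ := norm_sub_le _ _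
        _ ≤ 1 + 1 := add_le_add (norm_mulShift_le _ _ _) (norm_mulShift_le _ _ _)
        _ = 2 := by norm_num
    exact h1.trans h2
  have ht2 : |t| ≤ 2 := by
    rw [hre] at hnorm
    simpa [Complex.norm_real] using hnorm
  refine ⟨Real.arcsin (-(t / 2)), ?_⟩
  have hs : Real.sin (Real.arcsin (-(t / 2))) = -(t / 2) := by
    apply Real.sin_arcsin <;> cases abs_le.1 ht2 <;> linarith
  rw [hs]
  push_cast
  have : (t : ℂ) = Complex.I * ν := hre.symm
  linear_combination Complex.I * this + ν * Complex.I_sq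

end SpecTwoPer

namespace SpecTwoPer

local notation "H" => lp (fun _ : ℤ => ℂ) 2

lemma approx_mem (T : H →L[ℂ] H)
    (hT : ∀ (x : H) (i : ℤ), (T x : ∀ _ : ℤ, ℂ) i
      = (x : ∀ _ : ℤ, ℂ) (i + 2) - (x : ∀ _ : ℤ, ℂ) (i - 2)) (θ : ℝ) :
    (2 * Complex.I * (Real.sin θ : ℂ)) ∈ spectrum ℂ T := by
  set w : ℂ := Complex.exp ((θ / 2 : ℝ) * Complex.I) with hw
  have hw0 : w ≠ 0 := Complex.exp_ne_zero _
  have hwn : ‖w‖ = 1 := by rw [hw, Complex.norm_exp_ofReal_mul_I]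
  set μ : ℂ := w ^ (2 : ℤ) - w ^ (-2 : ℤ) with hμdef
  have hw2 : w ^ (2 : ℤ) = Complex.exp ((θ : ℂ) * Complex.I) := by
    rw [hw, ← Complex.exp_int_mul]
    congr 1
    push_cast
    ring
  have hμ : μ = 2 * Complex.I * (Real.sin θ : ℂ) := by
    have hw2' : w ^ (-2 : ℤ) = Complex.exp (-((θ : ℂ) * Complex.I)) := by
      rw [zpow_neg, hw2, Complex.exp_neg]
    have h1 : Complex.exp ((θ : ℂ) * Complex.I)
        = Complex.cos θ + Complex.sin θ * Complex.I := by rw [Complex.exp_mul_I]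
    have h2 : Complex.exp (-((θ : ℂ) * Complex.I))
        = Complex.cos θ - Complex.sin θ * Complex.I := by
      rw [show -((θ : ℂ) * Complex.I) = (-θ : ℂ) * Complex.I by ring, Complex.exp_mul_I,
        Complex.cos_neg, Complex.sin_neg]
      ring
    rw [hμdef, hw2, hw2', h1, h2, Complex.ofReal_sin]
    ring
  rw [← hμ]
  -- the key quantitative fact: approximate eigenvectors of arbitrarily large norm
  have key : ∀ n : ℕ, ∃ v : H, (‖v‖ ^ 2 = (n : ℝ)) ∧ ‖T v - μ • v‖ ≤ 12 := by
    intro n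
    set vf : ℤ → ℂ := fun j => if 0 ≤ j ∧ j < (n : ℤ) then w ^ j else 0 with hvf
    have hvf0 : ∀ j : ℤ, j ∉ Finset.Ico (0 : ℤ) (n : ℤ) → vf j = 0 := by
      intro j hj
      rw [Finset.mem_Ico] at hj
      rw [hvf]
      exact if_neg hj
    have hvfmem : Memℓp vf 2 := by
      apply memℓp_gen
      apply summable_of_ne_finset_zero (s := Finset.Ico (0 : ℤ) (n : ℤ))
      intro j hj
      rw [hvf0 j hj, norm_zero, Real.zero_rpow (by norm_num)]
    set v : H := ⟨vf, hvfmem⟩ with hv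
    have hvcoe : ∀ j, (v : ∀ _ : ℤ, ℂ) j = vf j := fun j => rfl
    have hvfpos : ∀ j : ℤ, 0 ≤ j → j < (n : ℤ) → vf j = w ^ j := by
      intro j h1 h2
      simp only [hvf]
      rw [if_pos ⟨h1, h2⟩]
    have hvfneg : ∀ j : ℤ, ¬(0 ≤ j ∧ j < (n : ℤ)) → vf j = 0 := by
      intro j h
      simp only [hvf]
      rw [if_neg h]
    refine ⟨v, ?_, ?_⟩
    · -- norm computation
      have h1 := lp.hasSum_norm two_pos v
      have h2 : HasSum (fun i : ℤ => ‖(v : ∀ _ : ℤ, ℂ) i‖ ^ (2 : ℝ≥0∞).toReal)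
          (∑ i ∈ Finset.Ico (0 : ℤ) (n : ℤ), ‖(v : ∀ _ : ℤ, ℂ) i‖ ^ (2 : ℝ≥0∞).toReal) := by
        apply hasSum_sum_of_ne_finset_zero
        intro j hj
        rw [hvcoe, hvf0 j hj, norm_zero, Real.zero_rpow (by norm_num)]
      have h3 : (∑ i ∈ Finset.Ico (0 : ℤ) (n : ℤ),
          ‖(v : ∀ _ : ℤ, ℂ) i‖ ^ (2 : ℝ≥0∞).toReal) = (n : ℝ) := by
        have heach : ∀ i ∈ Finset.Ico (0 : ℤ) (n : ℤ),
            ‖(v : ∀ _ : ℤ, ℂ) i‖ ^ (2 : ℝ≥0∞).toReal = 1 := by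
          intro i hi
          rw [Finset.mem_Ico] at hi
          rw [hvcoe, hvfpos i hi.1 hi.2, norm_zpow, hwn, one_zpow, Real.one_rpow]
        rw [Finset.sum_congr rfl heach, Finset.sum_const, nsmul_eq_mul, mul_one, Int.card_Ico]
        simp
      have h4 : ‖v‖ ^ (2 : ℝ≥0∞).toReal = (n : ℝ) := h1.unique (h3 ▸ h2)
      calc ‖v‖ ^ 2 = ‖v‖ ^ ((2 : ℕ) : ℝ) := (Real.rpow_natCast _ 2).symm
        _ = ‖v‖ ^ (2 : ℝ≥0∞).toReal := by norm_num
        _ = (n : ℝ) := h4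
    · -- residual bound
      set r : H := T v - μ • v with hr
      have hrcoe : ∀ i : ℤ, (r : ∀ _ : ℤ, ℂ) i = vf (i + 2) - vf (i - 2) - μ * vf i := by
        intro i
        rw [hr]
        rw [lp.coeFn_sub, Pi.sub_apply, lp.coeFn_smul, Pi.smul_apply, hT, hvcoe, hvcoe, hvcoe,
          smul_eq_mul]
      set S : Finset ℤ := Finset.Icc (-2 : ℤ) 1 ∪ Finset.Icc ((n : ℤ) - 2) ((n : ℤ) + 1)
        with hS
      have hsupp : ∀ i : ℤ, i ∉ S → (r : ∀ _ : ℤ, ℂ) i = 0 := by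
        intro i hi
        rw [hS, Finset.mem_union, Finset.mem_Icc, Finset.mem_Icc] at hi
        push_neg at hi
        have hcases : (i + 2 < 0) ∨ (2 ≤ i ∧ i + 2 < (n : ℤ)) ∨ ((n : ℤ) ≤ i - 2) := by
          omega
        rw [hrcoe]
        rcases hcases with hc | hc | hc
        · rw [hvfneg _ (by omega), hvfneg _ (by omega), hvfneg _ (by omega)]
          ring
        · rw [hvfpos _ (by omega) (by omega), hvfpos _ (by omega) (by omega),
            hvfpos _ (by omega) (by omega)]
          have e1 : w ^ (i + 2) = w ^ i * w ^ (2 : ℤ) := zpow_add₀ hw0 i 2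
          have e2 : w ^ (i - 2) = w ^ i * w ^ (-2 : ℤ) := by
            rw [← zpow_add₀ hw0]
            congr 1
          rw [hμdef, e1, e2]
          ring
        · rw [hvfneg _ (by omega), hvfneg _ (by omega), hvfneg _ (by omega)]
          ring
      have hvf1 : ∀ j : ℤ, ‖vf j‖ ≤ 1 := by
        intro j
        simp only [hvf]
        split_ifs
        · rw [norm_zpow, hwn, one_zpow]
        · simp
      have hμn : ‖μ‖ ≤ 2 := by
        rw [hμdef]
        calc ‖w ^ (2 : ℤ) - w ^ (-2 : ℤ)‖ ≤ ‖w ^ (2 : ℤ)‖ + ‖w ^ (-2 : ℤ)‖ := norm_sub_le _ _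
          _ = 2 := by rw [norm_zpow, norm_zpow, hwn, one_zpow, one_zpow]; norm_num
      have hbd : ∀ i : ℤ, ‖(r : ∀ _ : ℤ, ℂ) i‖ ^ (2 : ℝ≥0∞).toReal ≤ 16 := by
        intro i
        have h5 : ‖(r : ∀ _ : ℤ, ℂ) i‖ ≤ 4 := by
          rw [hrcoe]
          have n1 := hvf1 (i + 2)
          have n2 := hvf1 (i - 2)
          have n3 := hvf1 i
          have hstep : ‖vf (i + 2) - vf (i - 2) - μ * vf i‖
              ≤ (‖vf (i + 2)‖ + ‖vf (i - 2)‖) + ‖μ‖ * ‖vf i‖ := by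
            calc ‖vf (i + 2) - vf (i - 2) - μ * vf i‖
                ≤ ‖vf (i + 2) - vf (i - 2)‖ + ‖μ * vf i‖ := norm_sub_le _ _
              _ ≤ (‖vf (i + 2)‖ + ‖vf (i - 2)‖) + ‖μ * vf i‖ := by
                  gcongr
                  exact norm_sub_le _ _
              _ = (‖vf (i + 2)‖ + ‖vf (i - 2)‖) + ‖μ‖ * ‖vf i‖ := by rw [norm_mul]
          have hμvf : ‖μ‖ * ‖vf i‖ ≤ 2 * 1 :=
            mul_le_mul hμn n3 (norm_nonneg _) (by norm_num)
          linarith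
        calc ‖(r : ∀ _ : ℤ, ℂ) i‖ ^ (2 : ℝ≥0∞).toReal
            ≤ (4 : ℝ) ^ (2 : ℝ≥0∞).toReal :=
              Real.rpow_le_rpow (norm_nonneg _) h5 (by norm_num)
          _ = 16 := by
              rw [show ((2 : ℝ≥0∞).toReal) = ((2 : ℕ) : ℝ) by norm_num, Real.rpow_natCast]
              norm_num
      have h1 := lp.hasSum_norm two_pos r
      have h2 : HasSum (fun i : ℤ => ‖(r : ∀ _ : ℤ, ℂ) i‖ ^ (2 : ℝ≥0∞).toReal)
          (∑ i ∈ S, ‖(r : ∀ _ : ℤ, ℂ) i‖ ^ (2 : ℝ≥0∞).toReal) := by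
        apply hasSum_sum_of_ne_finset_zero
        intro j hj
        rw [hsupp j hj, norm_zero, Real.zero_rpow (by norm_num)]
      have h4 : ‖r‖ ^ (2 : ℝ≥0∞).toReal
          = ∑ i ∈ S, ‖(r : ∀ _ : ℤ, ℂ) i‖ ^ (2 : ℝ≥0∞).toReal := h1.unique h2
      have hcard : (S.card : ℝ) ≤ 8 := by
        have := Finset.card_union_le (Finset.Icc (-2 : ℤ) 1)
          (Finset.Icc ((n : ℤ) - 2) ((n : ℤ) + 1))
        rw [hS]
        have c1 : (Finset.Icc (-2 : ℤ) 1).card = 4 := by rw [Int.card_Icc]; rfl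
        have c2 : (Finset.Icc ((n : ℤ) - 2) ((n : ℤ) + 1)).card = 4 := by
          rw [Int.card_Icc]
          omega
        have : ((Finset.Icc (-2 : ℤ) 1 ∪ Finset.Icc ((n : ℤ) - 2) ((n : ℤ) + 1)).card : ℝ)
            ≤ ((Finset.Icc (-2 : ℤ) 1).card : ℝ)
              + ((Finset.Icc ((n : ℤ) - 2) ((n : ℤ) + 1)).card : ℝ) := by
          exact_mod_cast this
        rw [c1, c2] at this
        exact this.trans (by norm_num)
      have h6 : ‖r‖ ^ (2 : ℝ≥0∞).toReal ≤ 144 := by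
        rw [h4]
        calc (∑ i ∈ S, ‖(r : ∀ _ : ℤ, ℂ) i‖ ^ (2 : ℝ≥0∞).toReal)
            ≤ ∑ _i ∈ S, (16 : ℝ) := Finset.sum_le_sum fun i _ => hbd i
          _ = (S.card : ℝ) * 16 := by rw [Finset.sum_const, nsmul_eq_mul]
          _ ≤ 8 * 16 := by nlinarith [hcard]
          _ ≤ 144 := by norm_num
      have h7 : ‖r‖ ^ 2 ≤ 144 := by
        calc ‖r‖ ^ 2 = ‖r‖ ^ ((2 : ℕ) : ℝ) := (Real.rpow_natCast _ 2).symm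
          _ = ‖r‖ ^ (2 : ℝ≥0∞).toReal := by norm_num
          _ ≤ 144 := h6
      nlinarith [norm_nonneg r]
  -- conclude
  rw [spectrum.mem_iff]
  intro hcon
  set B : H →L[ℂ] H := ↑hcon.unit⁻¹ with hB
  obtain ⟨n, hn⟩ := exists_nat_gt ((‖B‖ * 12) ^ 2)
  obtain ⟨v, hv1, hv2⟩ := key n
  have hinv : B * (algebraMap ℂ (H →L[ℂ] H) μ - T) = 1 := by
    have h := hcon.unit.inv_mul
    rw [IsUnit.unit_spec hcon] at h
    exact h
  have hveq : v = B ((algebraMap ℂ (H →L[ℂ] H) μ - T) v) := by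
    have := congrArg (fun M : H →L[ℂ] H => M v) hinv
    simpa [ContinuousLinearMap.mul_apply] using this.symm
  have happ : (algebraMap ℂ (H →L[ℂ] H) μ - T) v = -(T v - μ • v) := by
    rw [ContinuousLinearMap.sub_apply, Algebra.algebraMap_eq_smul_one,
      ContinuousLinearMap.smul_apply, ContinuousLinearMap.one_apply]
    abel
  have hvle : ‖v‖ ≤ ‖B‖ * 12 := by
    calc ‖v‖ = ‖B ((algebraMap ℂ (H →L[ℂ] H) μ - T) v)‖ := by rw [← hveq]
      _ ≤ ‖B‖ * ‖(algebraMap ℂ (H →L[ℂ] H) μ - T) v‖ := B.le_opNorm _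
      _ = ‖B‖ * ‖T v - μ • v‖ := by rw [happ, norm_neg]
      _ ≤ ‖B‖ * 12 := by
          have := norm_nonneg B
          nlinarith [hv2]
  have : (n : ℝ) ≤ (‖B‖ * 12) ^ 2 := by
    rw [← hv1]
    exact pow_le_pow_left₀ (norm_nonneg v) hvle 2
  linarith

end SpecTwoPer

namespace SpecTwoPer

local notation "H" => lp (fun _ : ℤ => ℂ) 2

lemma neg_one_norm : ∀ i : ℤ, ‖((-1 : ℂ) ^ i : ℂ)‖ = 1 := by
  intro i
  rw [norm_zpow]
  simp

/-- The diagonal involution `(D x) i = (-1)^i * x i`. -/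
def D : H →L[ℂ] H := mulShift (fun i => (-1 : ℂ) ^ i) neg_one_norm (Equiv.refl ℤ)

lemma D_mul_D : D * D = 1 := by
  ext x i
  have h : ((-1 : ℂ) ^ i) * ((-1 : ℂ) ^ i) = 1 := by
    rw [← mul_zpow]
    norm_num
  simp only [ContinuousLinearMap.mul_apply, ContinuousLinearMap.one_apply, D, mulShift_apply,
    Equiv.refl_apply]
  rw [← mul_assoc, h, one_mul]

lemma spec_symm (b : ℤ → ℂ) (A : H →L[ℂ] H)
    (hA : ∀ (x : H) (i : ℤ),
      (A x : ∀ _ : ℤ, ℂ) i = b (i - 1) * (x : ∀ _ : ℤ, ℂ) (i - 1) + (x : ∀ _ : ℤ, ℂ) (i + 1)) :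
    spectrum ℂ A = -spectrum ℂ A := by
  have hc : (-1 : ℂ) ≠ 0 := by norm_num
  have hDAD : D * A * D = -A := by
    ext x i
    simp only [ContinuousLinearMap.mul_apply, ContinuousLinearMap.neg_apply, lp.coeFn_neg,
      Pi.neg_apply, D, mulShift_apply, Equiv.refl_apply]
    rw [hA, hA]
    simp only [mulShift_apply, Equiv.refl_apply]
    have p1 : ((-1 : ℂ) ^ i) * ((-1 : ℂ) ^ (i - 1)) = -1 := by
      rw [← zpow_add₀ hc]
      have : i + (i - 1) = 2 * i - 1 := by ring
      rw [this, zpow_sub₀ hc, zpow_mul]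
      norm_num
    have p2 : ((-1 : ℂ) ^ i) * ((-1 : ℂ) ^ (i + 1)) = -1 := by
      rw [← zpow_add₀ hc]
      have : i + (i + 1) = 2 * i + 1 := by ring
      rw [this, zpow_add₀ hc, zpow_mul]
      norm_num
    linear_combination (b (i - 1) * (x : ∀ _ : ℤ, ℂ) (i - 1)) * p1
      + ((x : ∀ _ : ℤ, ℂ) (i + 1)) * p2
  have hconj := spectrum.units_conjugate (R := ℂ) (a := A) (u := ⟨D, D, D_mul_D, D_mul_D⟩)
  have h2 : spectrum ℂ (D * A * D) = spectrum ℂ A := hconj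
  rw [hDAD] at h2
  have h3 : -spectrum ℂ A = spectrum ℂ A := by rw [spectrum.neg_eq, h2]
  exact h3.symm

end SpecTwoPer

namespace SpecTwoPer

lemma b_step (b : ℤ → ℂ) (hper : ∀ j : ℤ, b (j + 2) = b j) (hnotconst : ∃ j : ℤ, b j ≠ b 0)
    (hpm : ∀ j : ℤ, b j = 1 ∨ b j = -1) : ∀ j : ℤ, b (j + 1) = -b j := by
  have claim : ∀ j : ℤ, (b j = b 0 ∧ b (j + 1) = b 1) ∨ (b j = b 1 ∧ b (j + 1) = b 0) := by
    intro j
    induction j using Int.induction_on with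
    | zero => exact Or.inl ⟨rfl, by norm_num⟩
    | succ k ih =>
      have hnext : b ((k : ℤ) + 1 + 1) = b k := by
        rw [show (k : ℤ) + 1 + 1 = (k : ℤ) + 2 by ring, hper]
      rcases ih with ⟨h1, h2⟩ | ⟨h1, h2⟩
      · right; exact ⟨h2, by rw [hnext, h1]⟩
      · left; exact ⟨h2, by rw [hnext, h1]⟩
    | pred k ih =>
      have hprev : b (-(k : ℤ) + 1) = b (-(k : ℤ) - 1) := by
        rw [show -(k : ℤ) + 1 = (-(k : ℤ) - 1) + 2 by ring, hper]
      have hmid : -(k : ℤ) - 1 + 1 = -(k : ℤ) := by ring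
      rcases ih with ⟨h1, h2⟩ | ⟨h1, h2⟩
      · right
        constructor
        · rw [← hprev, h2]
        · rw [hmid, h1]
      · left
        constructor
        · rw [← hprev, h2]
        · rw [hmid, h1]
  have hne : b 1 ≠ b 0 := by
    intro he
    obtain ⟨j, hj⟩ := hnotconst
    apply hj
    rcases claim j with ⟨h1, _⟩ | ⟨h1, _⟩
    · exact h1
    · rw [h1, he]
  have h10 : b 1 = -b 0 := by
    rcases hpm 0 with h0 | h0 <;> rcases hpm 1 with h1 | h1
    · exact absurd (h1.trans h0.symm) hne
    · rw [h0, h1]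
    · rw [h0, h1]; norm_num
    · exact absurd (h1.trans h0.symm) hne
  intro j
  rcases claim j with ⟨h1, h2⟩ | ⟨h1, h2⟩
  · rw [h2, h10, h1]
  · rw [h2, h1, h10]; ring

end SpecTwoPer

/-- For `2`-periodic non-constant `b ∈ {±1}^ℤ`, the spectrum of `A^b` on `ℓ²(ℤ)` is
`τ₂ = {λ ∈ ℂ : λ² = 2i sin θ for some θ ∈ ℝ}`. -/
theorem spectrum_two_periodic (b : ℤ → ℂ)
    (hper : ∀ j : ℤ, b (j + 2) = b j) (hnotconst : ∃ j : ℤ, b j ≠ b 0)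
    (hpm : ∀ j : ℤ, b j = 1 ∨ b j = -1)
    (A : lp (fun _ : ℤ => ℂ) 2 →L[ℂ] lp (fun _ : ℤ => ℂ) 2)
    (hA : ∀ (x : lp (fun _ : ℤ => ℂ) 2) (i : ℤ),
      (A x : ∀ _ : ℤ, ℂ) i = b (i - 1) * (x : ∀ _ : ℤ, ℂ) (i - 1) + (x : ∀ _ : ℤ, ℂ) (i + 1)) :
    spectrum ℂ A = {lam : ℂ | ∃ θ : ℝ, lam ^ 2 = 2 * Complex.I * (Real.sin θ : ℂ)} := by
  have hb1 : ∀ j : ℤ, b (j + 1) = -b j := SpecTwoPer.b_step b hper hnotconst hpm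
  have hbsq : ∀ j : ℤ, b j * b j = 1 := by
    intro j; rcases hpm j with h | h <;> rw [h] <;> norm_num
  have hT : ∀ (x : lp (fun _ : ℤ => ℂ) 2) (i : ℤ),
      ((A ^ 2) x : ∀ _ : ℤ, ℂ) i = (x : ∀ _ : ℤ, ℂ) (i + 2) - (x : ∀ _ : ℤ, ℂ) (i - 2) := by
    intro x i
    have hpow : (A ^ 2) x = A (A x) := by rw [pow_two, ContinuousLinearMap.mul_apply]
    rw [hpow, hA (A x) i, hA x, hA x]
    have e1 : i - 1 - 1 = i - 2 := by ring
    have e2 : i - 1 + 1 = i := by ring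
    have e3 : i + 1 - 1 = i := by ring
    have e4 : i + 1 + 1 = i + 2 := by ring
    rw [e1, e2, e3, e4]
    have p1 : b (i - 1) * b (i - 2) = -1 := by
      have h := hb1 (i - 2)
      rw [show i - 2 + 1 = i - 1 by ring] at h
      rw [h]
      have h2 := hbsq (i - 2)
      linear_combination -h2
    have p2 : b i = -b (i - 1) := by
      have h := hb1 (i - 1)
      rw [show i - 1 + 1 = i by ring] at h
      exact h
    linear_combination ((x : ∀ _ : ℤ, ℂ) (i - 2)) * p1 + ((x : ∀ _ : ℤ, ℂ) i) * p2
  have hmap : spectrum ℂ (A ^ 2) = (fun z : ℂ => z ^ 2) '' spectrum ℂ A :=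
    spectrum.map_pow_of_pos A (by norm_num)
  have hsymm := SpecTwoPer.spec_symm b A hA
  ext lam
  simp only [Set.mem_setOf_eq]
  constructor
  · intro hlam
    have h2 : lam ^ 2 ∈ spectrum ℂ (A ^ 2) := by
      rw [hmap]; exact ⟨lam, hlam, rfl⟩
    obtain ⟨θ, hθ⟩ := SpecTwoPer.upper_bound (A ^ 2) hT h2
    exact ⟨θ, hθ⟩
  · rintro ⟨θ, hθ⟩
    have hmem := SpecTwoPer.approx_mem (A ^ 2) hT θ
    rw [hmap] at hmem
    obtain ⟨μ0, hμ0, hsq⟩ := hmem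
    have hcases : lam = μ0 ∨ lam = -μ0 := by
      have hz : (lam - μ0) * (lam + μ0) = 0 := by
        have he : lam ^ 2 = μ0 ^ 2 := by rw [hθ, ← hsq]
        linear_combination he
      rcases mul_eq_zero.1 hz with h | h
      · exact Or.inl (sub_eq_zero.1 h)
      · exact Or.inr (eq_neg_of_add_eq_zero_left h)
    rcases hcases with rfl | rfl
    · exact hμ0
    · rw [hsymm]
      exact Set.neg_mem_neg.mpr hμ0
end
end

section
/- The set {λ = x + iy ∈ ℂ : λ³ − λ = −2i sin θ for some θ ∈ ℝ} equals i[−1,1] ∪ {x + iy : −1/2 ≤ y ≤ 1/2, x² = 1 + 3y²}. -/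
/-- `{λ ∈ ℂ : λ³ − λ = −2i sin θ for some θ ∈ ℝ}` equals
`i[−1,1] ∪ {x + iy : −1/2 ≤ y ≤ 1/2, x² = 1 + 3y²}`. -/
theorem cube_sub_self_eq_neg_two_I_sin_iff :
    {lam : ℂ | ∃ θ : ℝ, lam ^ 3 - lam = -2 * Complex.I * (Real.sin θ : ℂ)} =
      (fun y : ℝ => (y : ℂ) * Complex.I) '' Set.Icc (-1 : ℝ) 1 ∪
        {lam : ℂ | -(1 / 2) ≤ lam.im ∧ lam.im ≤ 1 / 2 ∧ lam.re ^ 2 = 1 + 3 * lam.im ^ 2} := by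
  have hrhs0 : ∀ r : ℝ, (-2 * Complex.I * (r : ℂ)).re = 0 := by intro r; simp
  have hrhs1 : ∀ r : ℝ, (-2 * Complex.I * (r : ℂ)).im = -2 * r := by intro r; simp
  ext lam
  simp only [Set.mem_setOf_eq, Set.mem_union, Set.mem_image, Set.mem_Icc]
  set x := lam.re with hx
  set y := lam.im with hy
  have hre : (lam ^ 3 - lam).re = x ^ 3 - 3 * x * y ^ 2 - x := by
    simp [pow_succ, Complex.mul_re, Complex.mul_im]; ring
  have him : (lam ^ 3 - lam).im = 3 * x ^ 2 * y - y ^ 3 - y := by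
    simp [pow_succ, Complex.mul_re, Complex.mul_im]; ring
  constructor
  · rintro ⟨θ, h⟩
    have h1 : x ^ 3 - 3 * x * y ^ 2 - x = 0 := by
      have := congrArg Complex.re h
      rw [hre, hrhs0] at this; exact this
    have h2 : 3 * x ^ 2 * y - y ^ 3 - y = -2 * Real.sin θ := by
      have := congrArg Complex.im h
      rw [him, hrhs1] at this; exact this
    have hs1 : Real.sin θ ≤ 1 := Real.sin_le_one θ
    have hs2 : -1 ≤ Real.sin θ := Real.neg_one_le_sin θ
    rcases mul_eq_zero.mp (show x * (x ^ 2 - 3 * y ^ 2 - 1) = 0 by nlinarith) with hx0 | hxc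
    · left
      have h2' : y ^ 3 + y = 2 * Real.sin θ := by rw [hx0] at h2; nlinarith
      refine ⟨y, ⟨?_, ?_⟩, ?_⟩
      · nlinarith [sq_nonneg (y - 1/2)]
      · nlinarith [sq_nonneg (y + 1/2)]
      · have : lam = (y : ℂ) * Complex.I := by
          apply Complex.ext
          · simpa using hx0
          · simp; exact hy.symm
        exact this.symm
    · right
      have hx2 : x ^ 2 = 1 + 3 * y ^ 2 := by linarith
      have h2' : 2 * y + 8 * y ^ 3 = -2 * Real.sin θ := by
        rw [← h2]; linear_combination (-3 * y) * hx2
      exact ⟨by nlinarith [sq_nonneg (y - 1/2)], by nlinarith [sq_nonneg (y + 1/2)], hx2⟩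
  · rintro (⟨y', ⟨hy1, hy2⟩, rfl⟩ | ⟨h1, h2, h3⟩)
    · refine ⟨Real.arcsin ((y' ^ 3 + y') / 2), ?_⟩
      rw [Real.sin_arcsin
        (by nlinarith [mul_nonneg (by linarith : (0:ℝ) ≤ y' + 1) (sq_nonneg (y' - 1/2))])
        (by nlinarith [mul_nonneg (by linarith : (0:ℝ) ≤ 1 - y') (sq_nonneg (y' + 1/2))])]
      apply Complex.ext
      · rw [hre, hrhs0, show x = 0 from by simp [hx], show y = y' from by simp [hy]]; ring
      · rw [him, hrhs1, show x = 0 from by simp [hx], show y = y' from by simp [hy]]; ring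
    · refine ⟨Real.arcsin (-(y + 4 * y ^ 3)), ?_⟩
      rw [Real.sin_arcsin (by nlinarith [sq_nonneg (2*y - 1), sq_nonneg (2*y + 1)])
        (by nlinarith [sq_nonneg (2*y - 1), sq_nonneg (2*y + 1)])]
      apply Complex.ext
      · rw [hre, hrhs0]; linear_combination x * h3
      · rw [him, hrhs1]; linear_combination (3 * y) * h3
end

section
/- Let b ∈ {±1}^ℤ with b_k = 1 for k ≤ 0, c = Rb (c_k = b_{−1−k}), and let A_o^{b,c} be the restriction of A^{b,c} to the odd sequences in ℓ^p(ℤ). Then A_o^{b,c} = E A_+^b P, where E : ℓ^p(ℕ) → ℓ_o^p(ℤ) is the odd extension and P the restriction; consequently spec A_+^b = spec A_o^{b,c} ⊆ spec A^{b,c}. -/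
open scoped ENNReal

namespace SpecSemiAux

/-- Odd extension at the function level. -/
noncomputable def efun (f : ℕ → ℂ) (k : ℤ) : ℂ :=
  if 1 ≤ k then f (k - 1).toNat else if k ≤ -1 then -f (-k - 1).toNat else 0

lemma efun_zero (f : ℕ → ℂ) : efun f 0 = 0 := by simp [efun]

lemma efun_pos (f : ℕ → ℂ) (n : ℕ) : efun f ((n : ℤ) + 1) = f n := by
  have h1 : (1 : ℤ) ≤ (n : ℤ) + 1 := by omega
  simp only [efun, if_pos h1]
  congr 1
  omega

lemma efun_natCast (f : ℕ → ℂ) (n : ℕ) :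
    efun f (n : ℤ) = if n = 0 then 0 else f (n - 1) := by
  cases n with
  | zero => simpa using efun_zero f
  | succ m =>
    have : ((m + 1 : ℕ) : ℤ) = (m : ℤ) + 1 := by push_cast; ring
    rw [this, efun_pos]
    simp

lemma efun_odd (f : ℕ → ℂ) (k : ℤ) : efun f (-k) = -efun f k := by
  rcases lt_trichotomy k 0 with h | rfl | h
  · have h1 : (1 : ℤ) ≤ -k := by omega
    have h2 : ¬ (1 : ℤ) ≤ k := by omega
    have h3 : k ≤ -1 := by omega
    simp [efun, h1, h2, h3]
  · simp [efun]
  · have h1 : ¬ (1 : ℤ) ≤ -k := by omega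
    have h2 : -k ≤ -1 := by omega
    have h3 : (1 : ℤ) ≤ k := by omega
    simp [efun, h1, h2, h3]

lemma efun_neg_natCast (f : ℕ → ℂ) (n : ℕ) :
    efun f (-(n : ℤ)) = -(if n = 0 then 0 else f (n - 1)) := by
  rw [efun_odd, efun_natCast]

lemma efun_lin (a : ℂ) (f g : ℕ → ℂ) (k : ℤ) :
    efun (fun n => a * f n - g n) k = a * efun f k - efun g k := by
  unfold efun
  split_ifs <;> ring

lemma efun_inj {f g : ℕ → ℂ} (h : ∀ k, efun f k = efun g k) : f = g := by
  funext n
  have := h ((n : ℤ) + 1)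
  rwa [efun_pos, efun_pos] at this

variable {p : ℝ≥0∞} [Fact (1 ≤ p)]

lemma toReal_pos (hp : p ≠ ∞) : 0 < p.toReal :=
  ENNReal.toReal_pos (by have := Fact.out (p := 1 ≤ p); intro h; simp [h] at this) hp

lemma memℓp_comp {α β : Type*} {g : β → ℂ} (hg : Memℓp g p) (e : α → β)
    (he : Function.Injective e) : Memℓp (fun a => g (e a)) p := by
  by_cases hp : p = ∞
  · subst hp
    apply memℓp_infty
    refine (memℓp_infty_iff.mp hg).mono ?_
    rintro - ⟨a, rfl⟩
    exact ⟨e a, rfl⟩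
  · apply memℓp_gen
    exact (hg.summable (toReal_pos hp)).comp_injective he

lemma memℓp_jfun {g : ℤ → ℂ} (hg : Memℓp g p) : Memℓp (fun k : ℤ => -g (-k)) p := by
  have := memℓp_comp (p := p) hg.neg (fun k : ℤ => -k) neg_injective
  simpa using this

lemma memℓp_pfun {g : ℤ → ℂ} (hg : Memℓp g p) : Memℓp (fun n : ℕ => g ((n : ℤ) + 1)) p :=
  memℓp_comp hg (fun n : ℕ => (n : ℤ) + 1) (by intro a b h; simp only at h; omega)

lemma memℓp_efun {f : ℕ → ℂ} (hf : Memℓp f p) : Memℓp (efun f) p := by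
  by_cases hp : p = ∞
  · subst hp
    apply memℓp_infty
    have hb : BddAbove (Set.range fun n => ‖f n‖) := memℓp_infty_iff.mp hf
    refine (hb.insert 0).mono ?_
    rintro - ⟨k, rfl⟩
    rcases lt_trichotomy k 0 with h | rfl | h
    · have h1 : ¬ (1 : ℤ) ≤ k := by omega
      have h2 : k ≤ -1 := by omega
      simp only [efun, if_neg h1, if_pos h2, norm_neg]
      exact Set.mem_insert_of_mem _ ⟨_, rfl⟩
    · simp only [efun_zero, norm_zero]
      exact Set.mem_insert _ _
    · have h1 : (1 : ℤ) ≤ k := by omega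
      simp only [efun, if_pos h1]
      exact Set.mem_insert_of_mem _ ⟨_, rfl⟩
  · apply memℓp_gen
    have hq : 0 < p.toReal := toReal_pos hp
    have hs : Summable fun n : ℕ => ‖f n‖ ^ p.toReal := hf.summable hq
    have key : ∀ n : ℕ, ‖efun f ((n : ℤ) + 1)‖ ^ p.toReal = ‖f n‖ ^ p.toReal := by
      intro n; rw [efun_pos]
    apply Summable.of_nat_of_neg
    · apply (summable_nat_add_iff 1).mp
      refine hs.congr fun n => ?_
      have : ((n + 1 : ℕ) : ℤ) = (n : ℤ) + 1 := by push_cast; ring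
      rw [this, key]
    · apply (summable_nat_add_iff 1).mp
      refine hs.congr fun n => ?_
      have : (-((n + 1 : ℕ) : ℤ)) = -((n : ℤ) + 1) := by push_cast; ring
      rw [this, efun_odd, norm_neg, key]

end SpecSemiAux

open SpecSemiAux in
/-- Let `b ∈ {±1}^ℤ` with `b_k = 1` for `k ≤ 0`, and `c = Rb` (`c_k = b_{−1−k}`).
The restriction of `A^{b,c}` to the odd sequences is unitarily equivalent (via the
odd extension `E` and restriction `P`) to the semi-infinite operator `A_+^b`;
consequently `spec A_+^b ⊆ spec A^{b,c}`. -/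
theorem spectrum_semiinfinite_subset_biinfinite (p : ℝ≥0∞) [Fact (1 ≤ p)] (b c : ℤ → ℂ)
    (hb1 : ∀ k : ℤ, k ≤ 0 → b k = 1) (hbpm : ∀ k : ℤ, b k = 1 ∨ b k = -1)
    (hc : ∀ k : ℤ, c k = b (-1 - k))
    (A : lp (fun _ : ℤ => ℂ) p →L[ℂ] lp (fun _ : ℤ => ℂ) p)
    (hA : ∀ (x : lp (fun _ : ℤ => ℂ) p) (i : ℤ),
      (A x : ∀ _ : ℤ, ℂ) i = b (i - 1) * (x : ∀ _ : ℤ, ℂ) (i - 1)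
        + c i * (x : ∀ _ : ℤ, ℂ) (i + 1))
    (Aplus : lp (fun _ : ℕ => ℂ) p →L[ℂ] lp (fun _ : ℕ => ℂ) p)
    (hAplus : ∀ (x : lp (fun _ : ℕ => ℂ) p) (n : ℕ),
      (Aplus x : ∀ _ : ℕ, ℂ) n =
        (if n = 0 then 0 else b (n : ℤ) * (x : ∀ _ : ℕ, ℂ) (n - 1))
          + (x : ∀ _ : ℕ, ℂ) (n + 1)) :
    spectrum ℂ Aplus ⊆ spectrum ℂ A := by
  intro z hz
  by_contra hzA
  rw [spectrum.mem_iff] at hz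
  apply hz; clear hz
  have hU : IsUnit (algebraMap ℂ _ z - A) := spectrum.notMem_iff.mp hzA
  set T : lp (fun _ : ℤ => ℂ) p →L[ℂ] lp (fun _ : ℤ => ℂ) p := algebraMap ℂ _ z - A with hTdef
  set S : lp (fun _ : ℕ => ℂ) p →L[ℂ] lp (fun _ : ℕ => ℂ) p :=
    algebraMap ℂ _ z - Aplus with hSdef
  -- pointwise formulas
  have hTapp : ∀ (w : lp (fun _ : ℤ => ℂ) p) (i : ℤ),
      (T w : ∀ _ : ℤ, ℂ) i = z * (w : ∀ _ : ℤ, ℂ) i - (A w : ∀ _ : ℤ, ℂ) i := by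
    intro w i
    simp [hTdef, Algebra.algebraMap_eq_smul_one, ContinuousLinearMap.sub_apply,
      ContinuousLinearMap.smul_apply, ContinuousLinearMap.one_apply]
    rfl
  have hSapp : ∀ (x : lp (fun _ : ℕ => ℂ) p) (n : ℕ),
      (S x : ∀ _ : ℕ, ℂ) n = z * (x : ∀ _ : ℕ, ℂ) n - (Aplus x : ∀ _ : ℕ, ℂ) n := by
    intro x n
    simp [hSdef, Algebra.algebraMap_eq_smul_one, ContinuousLinearMap.sub_apply,
      ContinuousLinearMap.smul_apply, ContinuousLinearMap.one_apply]
    rfl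
  obtain ⟨u, hu⟩ := hU
  set B : lp (fun _ : ℤ => ℂ) p →L[ℂ] lp (fun _ : ℤ => ℂ) p := ↑u⁻¹ with hBdef
  have hTB : ∀ y, T (B y) = y := by
    intro y
    have h1 := Units.mul_inv u
    have h2 := congrArg (fun f : lp (fun _ : ℤ => ℂ) p →L[ℂ] lp (fun _ : ℤ => ℂ) p => f y) h1
    simpa [hu, hBdef, ContinuousLinearMap.mul_apply, ContinuousLinearMap.one_apply] using h2
  have hBT : ∀ y, B (T y) = y := by
    intro y
    have h1 := Units.inv_mul u
    have h2 := congrArg (fun f : lp (fun _ : ℤ => ℂ) p →L[ℂ] lp (fun _ : ℤ => ℂ) p => f y) h1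
    simpa [hu, hBdef, ContinuousLinearMap.mul_apply, ContinuousLinearMap.one_apply] using h2
  have hTinj : ∀ v w, T v = T w → v = w := by
    intro v w h
    have := congrArg B h
    rwa [hBT, hBT] at this
  -- the maps E, P, J at the lp level
  set E : lp (fun _ : ℕ => ℂ) p → lp (fun _ : ℤ => ℂ) p :=
    fun x => ⟨efun (x : ∀ _ : ℕ, ℂ), memℓp_efun (lp.memℓp x)⟩ with hEdef
  set Pfn : lp (fun _ : ℤ => ℂ) p → lp (fun _ : ℕ => ℂ) p :=
    fun w => ⟨fun n => (w : ∀ _ : ℤ, ℂ) ((n : ℤ) + 1), memℓp_pfun (lp.memℓp w)⟩ with hPdef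
  set J : lp (fun _ : ℤ => ℂ) p → lp (fun _ : ℤ => ℂ) p :=
    fun w => ⟨fun k => -(w : ∀ _ : ℤ, ℂ) (-k), memℓp_jfun (lp.memℓp w)⟩ with hJdef
  have hEcoe : ∀ x (k : ℤ), (E x : ∀ _ : ℤ, ℂ) k = efun (x : ∀ _ : ℕ, ℂ) k := fun _ _ => rfl
  have hJcoe : ∀ w (k : ℤ), (J w : ∀ _ : ℤ, ℂ) k = -(w : ∀ _ : ℤ, ℂ) (-k) := fun _ _ => rfl
  have hPcoe : ∀ w (n : ℕ), (Pfn w : ∀ _ : ℕ, ℂ) n = (w : ∀ _ : ℤ, ℂ) ((n : ℤ) + 1) :=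
    fun _ _ => rfl
  -- conjugation identity : A ∘ E = E ∘ Aplus
  have h1 : ∀ x, A (E x) = E (Aplus x) := by
    intro x
    apply lp.ext
    funext i
    simp only [hA (E x) i, hEcoe]
    rcases lt_trichotomy i 0 with hi | rfl | hi
    · obtain ⟨n, rfl⟩ : ∃ n : ℕ, i = -((n : ℤ) + 1) := ⟨(-i - 1).toNat, by omega⟩
      have e1 : (-((n : ℤ) + 1) - 1) = -((n + 2 : ℕ) : ℤ) := by push_cast; ring
      have e2 : (-((n : ℤ) + 1) + 1) = -((n : ℕ) : ℤ) := by push_cast; ring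
      have e3 : (-1 - -((n : ℤ) + 1)) = ((n : ℕ) : ℤ) := by push_cast; ring
      rw [e1, e2, efun_neg_natCast, efun_neg_natCast, efun_odd, efun_pos,
        hAplus x n, hc, e3, hb1 (-((n + 2 : ℕ) : ℤ)) (by omega)]
      rw [show n + 2 - 1 = n + 1 from by omega, if_neg (by omega : ¬ n + 2 = 0)]
      split_ifs with h
      · subst h; ring
      · ring
    · rw [efun_zero]
      have e1 : ((0 : ℤ) - 1) = -(((1 : ℕ) : ℤ)) := by norm_num
      have e2 : ((0 : ℤ) + 1) = ((0 : ℕ) : ℤ) + 1 := by norm_num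
      rw [e1, e2, efun_neg_natCast, efun_pos, hc, hb1 (-((1 : ℕ) : ℤ)) (by omega),
        hb1 (-1 - 0) (by omega)]
      norm_num
    · obtain ⟨n, rfl⟩ : ∃ n : ℕ, i = (n : ℤ) + 1 := ⟨(i - 1).toNat, by omega⟩
      have e1 : ((n : ℤ) + 1 - 1) = ((n : ℕ) : ℤ) := by ring
      have e2 : ((n : ℤ) + 1 + 1) = ((n + 1 : ℕ) : ℤ) + 1 := by push_cast; ring
      rw [e1, e2, efun_natCast, efun_pos, efun_pos, hAplus x n, hc,
        hb1 (-1 - ((n : ℤ) + 1)) (by omega)]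
      split_ifs with h
      · subst h; ring
      · ring
  -- T ∘ E = E ∘ S
  have hTE : ∀ x, T (E x) = E (S x) := by
    intro x
    apply lp.ext
    funext k
    have hcoeS : (S x : ∀ _ : ℕ, ℂ)
        = fun n => z * (x : ∀ _ : ℕ, ℂ) n - (Aplus x : ∀ _ : ℕ, ℂ) n := funext (hSapp x)
    have : (A (E x) : ∀ _ : ℤ, ℂ) k = efun (Aplus x : ∀ _ : ℕ, ℂ) k := by
      rw [h1 x]
    rw [hTapp, this, hEcoe, hEcoe, hcoeS, efun_lin]
  -- A commutes with J, hence T does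
  have hAJ : ∀ w (k : ℤ), (A (J w) : ∀ _ : ℤ, ℂ) k = -((A w : ∀ _ : ℤ, ℂ) (-k)) := by
    intro w k
    rw [hA (J w) k, hA w (-k), hJcoe, hJcoe, hc k, hc (-k)]
    have e1 : (-(k - 1)) = -k + 1 := by ring
    have e2 : (-(k + 1)) = -k - 1 := by ring
    have e3 : (-1 - k) = -k - 1 := by ring
    have e4 : (-1 - -k) = k - 1 := by ring
    rw [e1, e2, e3, e4]
    ring
  have hTJ : ∀ w, T (J w) = J (T w) := by
    intro w
    apply lp.ext
    funext k
    rw [hTapp, hJcoe, hJcoe, hAJ, hTapp]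
    ring
  -- B preserves odd sequences
  have hoddB : ∀ w : lp (fun _ : ℤ => ℂ) p, (∀ k : ℤ, (w : ∀ _ : ℤ, ℂ) (-k) = -(w : ∀ _ : ℤ, ℂ) k) →
      ∀ k : ℤ, (B w : ∀ _ : ℤ, ℂ) (-k) = -(B w : ∀ _ : ℤ, ℂ) k := by
    intro w hw
    have hJw : J w = w := by
      apply lp.ext
      funext k
      rw [hJcoe, hw k, neg_neg]
    have hkey : J (B w) = B w := by
      apply hTinj
      rw [hTJ, hTB]
      exact hJw
    intro k
    have := congrArg (fun v : lp (fun _ : ℤ => ℂ) p => (v : ∀ _ : ℤ, ℂ) k) hkey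
    simp only [hJcoe] at this
    linear_combination -this
  have hEodd : ∀ x (k : ℤ), (E x : ∀ _ : ℤ, ℂ) (-k) = -(E x : ∀ _ : ℤ, ℂ) k := by
    intro x k
    rw [hEcoe, hEcoe, efun_odd]
  -- E ∘ P = id on odd sequences
  have hEP : ∀ w : lp (fun _ : ℤ => ℂ) p, (∀ k : ℤ, (w : ∀ _ : ℤ, ℂ) (-k) = -(w : ∀ _ : ℤ, ℂ) k) → E (Pfn w) = w := by
    intro w hw
    apply lp.ext
    funext k
    rw [hEcoe]
    rcases lt_trichotomy k 0 with hk | rfl | hk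
    · obtain ⟨n, rfl⟩ : ∃ n : ℕ, k = -((n : ℤ) + 1) := ⟨(-k - 1).toNat, by omega⟩
      rw [efun_odd, efun_pos, hPcoe, hw ((n : ℤ) + 1)]
    · rw [efun_zero]
      have h0 := hw 0
      rw [neg_zero] at h0
      linear_combination -h0 / 2
    · obtain ⟨n, rfl⟩ : ∃ n : ℕ, k = (n : ℤ) + 1 := ⟨(k - 1).toNat, by omega⟩
      rw [efun_pos, hPcoe]
  have hEinj : ∀ x y, E x = E y → x = y := by
    intro x y h
    have hc2 : efun (x : ∀ _ : ℕ, ℂ) = efun (y : ∀ _ : ℕ, ℂ) := congrArg Subtype.val h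
    exact lp.ext (efun_inj fun k => congrFun hc2 k)
  -- S is bijective
  have hSinj : Function.Injective S := by
    intro x y h
    apply hEinj
    apply hTinj
    rw [hTE, hTE, h]
  have hSsurj : Function.Surjective S := by
    intro y
    have hw := hoddB (E y) (hEodd y)
    refine ⟨Pfn (B (E y)), hEinj _ _ ?_⟩
    rw [← hTE, hEP _ hw, hTB]
  set e := ContinuousLinearEquiv.ofBijective S (LinearMap.ker_eq_bot.mpr hSinj)
    (LinearMap.range_eq_top.mpr hSsurj) with hedef
  have happ : ∀ x, e x = S x := fun x => rfl
  refine ⟨⟨S, (e.symm : lp (fun _ : ℕ => ℂ) p →L[ℂ] lp (fun _ : ℕ => ℂ) p), ?_, ?_⟩, rfl⟩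
  · ext y
    have : S (e.symm y) = e (e.symm y) := (happ _).symm
    simp [ContinuousLinearMap.mul_apply, this]
  · ext y
    have : S y = e y := (happ _).symm
    simp [ContinuousLinearMap.mul_apply, this]
end

section
/- For any b ∈ {±1}^ℤ, the numerical range of A^b on ℓ²(ℤ) is contained in the open square Δ = {x + iy : x, y ∈ ℝ, |x| + |y| < 2}. -/
set_option maxHeartbeats 1000000 in
/-- For any `b ∈ {±1}^ℤ`, the numerical range of `A^b` on `ℓ²(ℤ)` is contained in
the open square `Δ = {x + iy : |x| + |y| < 2}`. -/
theorem numerical_range_subset_square (b : ℤ → ℝ)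
    (hb : ∀ i : ℤ, b i = 1 ∨ b i = -1)
    (A : lp (fun _ : ℤ => ℂ) 2 →L[ℂ] lp (fun _ : ℤ => ℂ) 2)
    (hA : ∀ (x : lp (fun _ : ℤ => ℂ) 2) (i : ℤ),
      (A x : ∀ _ : ℤ, ℂ) i = (b (i - 1) : ℂ) * (x : ∀ _ : ℤ, ℂ) (i - 1)
        + (x : ∀ _ : ℤ, ℂ) (i + 1)) :
    ∀ x : lp (fun _ : ℤ => ℂ) 2, ‖x‖ = 1 →
      |(inner ℂ (A x) x : ℂ).re| + |(inner ℂ (A x) x : ℂ).im| < 2 := by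
  intro x hx
  set fx : ℤ → ℂ := (x : ∀ _ : ℤ, ℂ) with hfx
  -- summability of squares
  have S2 : Summable (fun k : ℤ => ‖fx k‖ ^ 2) := by
    have := (memℓp_gen_iff (p := 2) (by norm_num) (f := fx)).1 (lp.memℓp x)
    simpa using this
  have S2s : Summable (fun k : ℤ => ‖fx (k + 1)‖ ^ 2) :=
    ((Equiv.addRight (1 : ℤ)).summable_iff).2 S2
  -- sum of squares is 1
  have sum_sq : ∑' k : ℤ, ‖fx k‖ ^ 2 = 1 := by
    have h := lp.hasSum_inner (𝕜 := ℂ) x x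
    have h2 : HasSum (fun k : ℤ => ((‖fx k‖ ^ 2 : ℝ) : ℂ)) ((1 : ℝ) : ℂ) := by
      have e1 : (inner ℂ x x : ℂ) = ((1:ℝ):ℂ) := by
        rw [inner_self_eq_norm_sq_to_K (𝕜 := ℂ)]
        rw [hx]; norm_num
      rw [e1] at h
      refine HasSum.congr_fun h fun k => ?_
      rw [RCLike.inner_apply, Complex.mul_conj']
      norm_cast
    have h3 := Complex.hasSum_re h2
    simp only [Complex.ofReal_re] at h3
    exact h3.tsum_eq
  -- product summability
  have hprod : Summable (fun k : ℤ => ‖fx k‖ * ‖fx (k + 1)‖) := by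
    apply Summable.of_nonneg_of_le (fun k => by positivity)
      (fun k => ?_) (((S2.add S2s).div_const 2))
    have := two_mul_le_add_sq (‖fx k‖) (‖fx (k + 1)‖)
    nlinarith
  have h2prod : Summable (fun k : ℤ => 2 * (‖fx k‖ * ‖fx (k + 1)‖)) := hprod.mul_left 2
  -- the sequence g
  set g : ℤ → ℂ := fun k =>
      (b k : ℂ) * (starRingEnd ℂ) (fx k) * fx (k + 1)
        + (starRingEnd ℂ) (fx (k + 1)) * fx k with hg
  set u : ℤ → ℂ := fun i => (b (i - 1) : ℂ) * (starRingEnd ℂ) (fx (i - 1)) * fx i with hu_def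
  set v : ℤ → ℂ := fun i => (starRingEnd ℂ) (fx (i + 1)) * fx i with hv_def
  set S : ℂ := (inner ℂ (A x) x : ℂ) with hSdef
  have hS : HasSum (fun i : ℤ => u i + v i) S := by
    have h := lp.hasSum_inner (𝕜 := ℂ) (A x) x
    have : (fun i : ℤ => (inner ℂ ((A x : ∀ _ : ℤ, ℂ) i) (fx i) : ℂ)) = fun i => u i + v i := by
      funext i
      rw [RCLike.inner_apply, hA]
      simp only [hu_def, hv_def, map_add, map_mul, Complex.conj_ofReal]
      ring
    rwa [this] at h
  -- summability of u, v
  have hnu : ∀ i : ℤ, ‖u i‖ = ‖fx (i - 1)‖ * ‖fx i‖ := by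
    intro i
    rcases hb (i - 1) with h | h <;> simp [hu_def, h, norm_mul]
  have hnv : ∀ i : ℤ, ‖v i‖ = ‖fx i‖ * ‖fx (i + 1)‖ := by
    intro i; simp [hv_def, norm_mul, mul_comm]
  have hu : Summable u := by
    apply Summable.of_norm
    have : Summable (fun i : ℤ => ‖fx (i - 1)‖ * ‖fx i‖) := by
      have h' := ((Equiv.subRight (1 : ℤ)).summable_iff).2 hprod
      refine h'.congr fun i => ?_
      simp
    simpa [hnu] using this
  have hv : Summable v := by
    apply Summable.of_norm
    simpa [hnv] using hprod
  -- HasSum g S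
  have hus : HasSum (fun k : ℤ => u (k + 1)) (∑' i, u i) := by
    have hcomp : (fun k : ℤ => u (k + 1)) = u ∘ (Equiv.addRight (1 : ℤ)) := rfl
    rw [hcomp, Equiv.hasSum_iff]
    exact hu.hasSum
  have hgS : HasSum g S := by
    have hsum : (∑' i, u i) + (∑' i, v i) = S := (hu.hasSum.add hv.hasSum).unique hS
    have h2 := hus.add hv.hasSum
    rw [hsum] at h2
    refine HasSum.congr_fun h2 fun k => ?_
    simp [hg, hu_def, hv_def, add_sub_cancel_right]
  -- key pointwise bound
  have hkey : ∀ k : ℤ, |(g k).re| + |(g k).im| ≤ 2 * (‖fx k‖ * ‖fx (k + 1)‖) := by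
    intro k
    set a : ℂ := (starRingEnd ℂ) (fx k) * fx (k + 1) with ha
    have hna : ‖a‖ = ‖fx k‖ * ‖fx (k + 1)‖ := by
      simp [ha, map_mul]
    have hconj : (starRingEnd ℂ) (fx (k + 1)) * fx k = (starRingEnd ℂ) a := by
      simp [ha, map_mul, mul_comm]
    rcases hb k with h | h
    · have e : g k = a + (starRingEnd ℂ) a := by rw [hg]; simp [h, hconj, ha]
      rw [e]
      simp only [Complex.add_re, Complex.add_im, Complex.conj_re, Complex.conj_im,
        add_neg_cancel, abs_zero, add_zero]
      rw [← hna]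
      have h1 := Complex.abs_re_le_norm a
      calc |a.re + a.re| ≤ |a.re| + |a.re| := abs_add_le _ _
        _ ≤ 2 * ‖a‖ := by linarith
    · have e : g k = -a + (starRingEnd ℂ) a := by rw [hg]; simp [h, hconj, ha]
      rw [e]
      simp only [Complex.add_re, Complex.add_im, Complex.conj_re, Complex.conj_im,
        Complex.neg_re, Complex.neg_im, neg_add_cancel, abs_zero, zero_add]
      rw [← hna]
      have h1 := Complex.abs_im_le_norm a
      calc |(-a.im) + -a.im| ≤ |(-a.im)| + |(-a.im)| := abs_add_le _ _
        _ ≤ 2 * ‖a‖ := by rw [abs_neg]; linarith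
  -- summability of |re|, |im|
  have hre_sum : Summable (fun k : ℤ => |(g k).re|) :=
    Summable.of_nonneg_of_le (fun k => abs_nonneg _)
      (fun k => le_trans (le_add_of_nonneg_right (abs_nonneg _)) (hkey k)) h2prod
  have him_sum : Summable (fun k : ℤ => |(g k).im|) :=
    Summable.of_nonneg_of_le (fun k => abs_nonneg _)
      (fun k => le_trans (le_add_of_nonneg_left (abs_nonneg _)) (hkey k)) h2prod
  -- |S.re| ≤ ∑ |re g|, etc.
  have hSre : S.re = ∑' k, (g k).re := (Complex.hasSum_re hgS).tsum_eq.symm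
  have hSim : S.im = ∑' k, (g k).im := (Complex.hasSum_im hgS).tsum_eq.symm
  have hre_le : |S.re| ≤ ∑' k, |(g k).re| := by
    rw [hSre]
    simpa using norm_tsum_le_tsum_norm (f := fun k => (g k).re) (by simpa using hre_sum)
  have him_le : |S.im| ≤ ∑' k, |(g k).im| := by
    rw [hSim]
    simpa using norm_tsum_le_tsum_norm (f := fun k => (g k).im) (by simpa using him_sum)
  -- find strict index
  have hk0 : ∃ k : ℤ, ‖fx k‖ ≠ ‖fx (k + 1)‖ := by
    by_contra hcon
    push_neg at hcon
    have hconst : ∀ k : ℤ, ‖fx k‖ = ‖fx 0‖ := by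
      intro k
      induction k using Int.induction_on with
      | zero => rfl
      | succ n ih => rw [← hcon n] at *; exact ih
      | pred n ih =>
        have := hcon (-(n:ℤ) - 1)
        simp only [sub_add_cancel] at this
        rw [this]; exact ih
    have : (fun k : ℤ => ‖fx k‖ ^ 2) = fun _ => ‖fx 0‖ ^ 2 := by
      funext k; rw [hconst k]
    rw [this] at S2 sum_sq
    have h0 : ‖fx 0‖ ^ 2 = 0 := by
      have := summable_const_iff (‖fx 0‖ ^ 2) |>.1 S2
      exact this
    rw [h0] at sum_sq
    simp at sum_sq
  obtain ⟨k0, hk0⟩ := hk0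
  -- strict tsum inequality
  have hstrict : ∑' k, (|(g k).re| + |(g k).im|) <
      ∑' k, (‖fx k‖ ^ 2 + ‖fx (k + 1)‖ ^ 2) := by
    apply Summable.tsum_lt_tsum (i := k0)
    · intro k
      refine le_trans (hkey k) ?_
      show 2 * (‖fx k‖ * ‖fx (k + 1)‖) ≤ ‖fx k‖ ^ 2 + ‖fx (k + 1)‖ ^ 2
      nlinarith [sq_nonneg (‖fx k‖ - ‖fx (k + 1)‖)]
    · refine lt_of_le_of_lt (hkey k0) ?_
      show 2 * (‖fx k0‖ * ‖fx (k0 + 1)‖) < ‖fx k0‖ ^ 2 + ‖fx (k0 + 1)‖ ^ 2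
      have hne : ‖fx k0‖ - ‖fx (k0 + 1)‖ ≠ 0 := sub_ne_zero.2 hk0
      have hpos : 0 < (‖fx k0‖ - ‖fx (k0 + 1)‖) ^ 2 := by positivity
      nlinarith
    · exact hre_sum.add him_sum
    · exact S2.add S2s
  have htot : ∑' k, (‖fx k‖ ^ 2 + ‖fx (k + 1)‖ ^ 2) = 2 := by
    rw [Summable.tsum_add S2 S2s]
    have : ∑' k : ℤ, ‖fx (k + 1)‖ ^ 2 = ∑' k : ℤ, ‖fx k‖ ^ 2 :=
      (Equiv.addRight (1 : ℤ)).tsum_eq (fun k => ‖fx k‖ ^ 2)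
    rw [this, sum_sq]; norm_num
  have hsplit : ∑' k, (|(g k).re| + |(g k).im|) = (∑' k, |(g k).re|) + ∑' k, |(g k).im| :=
    Summable.tsum_add hre_sum him_sum
  calc |S.re| + |S.im| ≤ (∑' k, |(g k).re|) + ∑' k, |(g k).im| := add_le_add hre_le him_le
    _ = ∑' k, (|(g k).re| + |(g k).im|) := hsplit.symm
    _ < ∑' k, (‖fx k‖ ^ 2 + ‖fx (k + 1)‖ ^ 2) := hstrict
    _ = 2 := htot
end
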